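/- If a multiset M ⊆ X×Y×Z is a perfect numerical 3-dimensional matching (each element used exactly once and x+y+z = b for each triple), then the permutation π of S = X' ∪ Y' ∪ Z' (with X' = X, Y' = {y+2b}, Z' = {z−3b}) that arranges each triple i as (x, z−3b, y+2b) satisfies P_j^π = 0 iff j ≡ 0 mod 3, P_j^π > 0 iff j ≡ 1 mod 3, P_j^π < 0 iff j ≡ 2 mod 3, and achieves ∑_j |P_j^π| = (∑_{s∈S}|s|)/2. -/

import Mathlib

lemma list_sum_getD {α : Type*} (g : α → ℤ) (d : α) :
    ∀ l : List α, ∑ i ∈ Finset.range l.length, g (l.getD i d) = (l.map g).sum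
  | [] => by simp
  | a :: l => by
    rw [List.length_cons, Finset.sum_range_succ']
    simp only [List.getD_cons_succ, List.getD_cons_zero, List.map_cons, List.sum_cons]
    rw [list_sum_getD g d l, add_comm]

/-- Forward direction of the NP-hardness reduction: if `M` is a perfect
numerical 3-dimensional matching (listed as a list of triples), the permutation that
arranges the `i`-th triple as `(x, z-3b, y+2b)` has prefix sums `P_j = 0` iff
`j ≡ 0 (mod 3)`, `P_j > 0` iff `j ≡ 1 (mod 3)`, `P_j < 0` iff `j ≡ 2 (mod 3)`, and
achieves `∑_j |P_j| = (∑_{s∈S} |s|)/2` (stated doubled to stay in `ℤ`). -/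
theorem stmt_8 (k : ℕ) (b : ℤ) (X Y Z : Multiset ℤ)
    (hpos : ∀ e ∈ X + Y + Z, 0 < e) (hlt : ∀ e ∈ X + Y + Z, e < b)
    (hb : (k : ℤ) * b = (X + Y + Z).sum)
    (M : List (ℤ × ℤ × ℤ)) (hlen : M.length = k)
    (hMx : (↑(M.map Prod.fst) : Multiset ℤ) = X)
    (hMy : (↑(M.map (fun t => t.2.1)) : Multiset ℤ) = Y)
    (hMz : (↑(M.map (fun t => t.2.2)) : Multiset ℤ) = Z)
    (htriple : ∀ t ∈ M, t.1 + t.2.1 + t.2.2 = b)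
    (π : ℕ → ℤ)
    (hπ : ∀ i < k,
      π (3 * i) = (M.getD i default).1 ∧
      π (3 * i + 1) = (M.getD i default).2.2 - 3 * b ∧
      π (3 * i + 2) = (M.getD i default).2.1 + 2 * b) :
    (∀ j ≤ 3 * k,
      ((∑ t ∈ Finset.range j, π t = 0 ↔ j % 3 = 0) ∧
        (0 < ∑ t ∈ Finset.range j, π t ↔ j % 3 = 1) ∧
        (∑ t ∈ Finset.range j, π t < 0 ↔ j % 3 = 2))) ∧
    2 * ∑ i ∈ Finset.range (3 * k), |∑ j ∈ Finset.range (i + 1), π j| =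
      ((X + Y.map (fun y => y + 2 * b) + Z.map (fun z => z - 3 * b)).map
        (fun x => |x|)).sum := by
  have hmem : ∀ i < k, M.getD i default ∈ M := by
    intro i hi
    rw [List.getD_eq_getElem _ _ (by omega)]
    exact List.getElem_mem _
  have hxb : ∀ t ∈ M, 0 < t.1 ∧ t.1 < b := by
    intro t ht
    have : t.1 ∈ X + Y + Z := by
      rw [← hMx]
      exact Multiset.mem_add.mpr (Or.inl (Multiset.mem_add.mpr (Or.inl
        (Multiset.mem_coe.mpr (List.mem_map_of_mem ht)))))
    exact ⟨hpos _ this, hlt _ this⟩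
  have hyb : ∀ t ∈ M, 0 < t.2.1 ∧ t.2.1 < b := by
    intro t ht
    have : t.2.1 ∈ X + Y + Z := by
      rw [← hMy]
      exact Multiset.mem_add.mpr (Or.inl (Multiset.mem_add.mpr (Or.inr
        (Multiset.mem_coe.mpr (List.mem_map_of_mem ht)))))
    exact ⟨hpos _ this, hlt _ this⟩
  have hzb : ∀ t ∈ M, 0 < t.2.2 ∧ t.2.2 < b := by
    intro t ht
    have : t.2.2 ∈ X + Y + Z := by
      rw [← hMz]
      exact Multiset.mem_add.mpr (Or.inr (Multiset.mem_coe.mpr (List.mem_map_of_mem ht)))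
    exact ⟨hpos _ this, hlt _ this⟩
  have hb0 : 0 < k → 0 < b := by
    intro hk
    have h1 := hxb _ (hmem 0 hk)
    linarith [h1.1, h1.2]
  -- prefix sums at block boundaries
  have hP0 : ∀ i, i ≤ k → ∑ t ∈ Finset.range (3 * i), π t = 0 := by
    intro i
    induction i with
    | zero => simp
    | succ n ih =>
      intro hn
      have hnk : n < k := by omega
      rw [show 3 * (n + 1) = 3 * n + 1 + 1 + 1 from by ring, Finset.sum_range_succ,
        Finset.sum_range_succ, Finset.sum_range_succ, ih (by omega)]
      obtain ⟨h1, h2, h3⟩ := hπ n hnk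
      rw [show 3 * n + 1 + 1 = 3 * n + 2 from rfl, h1, h2, h3]
      have := htriple _ (hmem n hnk)
      linarith
  have hP1 : ∀ i < k, ∑ t ∈ Finset.range (3 * i + 1), π t = (M.getD i default).1 := by
    intro i hi
    rw [Finset.sum_range_succ, hP0 i (le_of_lt hi), (hπ i hi).1, zero_add]
  have hP2 : ∀ i < k, ∑ t ∈ Finset.range (3 * i + 2), π t = -(2 * b) - (M.getD i default).2.1 := by
    intro i hi
    rw [show (3 * i + 2 : ℕ) = 3 * i + 1 + 1 from rfl, Finset.sum_range_succ, hP1 i hi,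
      (hπ i hi).2.1]
    have := htriple _ (hmem i hi)
    linarith
  have hP3 : ∀ i < k, ∑ t ∈ Finset.range (3 * i + 3), π t = 0 := by
    intro i hi
    rw [show (3 * i + 3 : ℕ) = 3 * (i + 1) from by ring]
    exact hP0 (i + 1) (by omega)
  constructor
  · intro j hj
    have hdm := Nat.div_add_mod j 3
    have hcases : j % 3 = 0 ∨ j % 3 = 1 ∨ j % 3 = 2 := by omega
    rcases hcases with h | h | h
    · have hj3 : j = 3 * (j / 3) := by omega
      rw [hj3, hP0 (j / 3) (by omega)]
      have e0 : 3 * (j / 3) % 3 = 0 := by omega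
      simp [e0]
    · have hik : j / 3 < k := by omega
      have hj3 : j = 3 * (j / 3) + 1 := by omega
      rw [hj3, hP1 (j / 3) hik]
      have hx := (hxb _ (hmem (j / 3) hik)).1
      have e0 : (3 * (j / 3) + 1) % 3 = 1 := by omega
      simp only [e0]
      generalize (M.getD (j / 3) default).1 = x at hx ⊢
      norm_num
      exact ⟨by linarith, hx, by linarith⟩
    · have hik : j / 3 < k := by omega
      have hj3 : j = 3 * (j / 3) + 2 := by omega
      rw [hj3, hP2 (j / 3) hik]
      have hy := (hyb _ (hmem (j / 3) hik)).1
      have hbp : 0 < b := hb0 (by omega)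
      have e0 : (3 * (j / 3) + 2) % 3 = 2 := by omega
      simp only [e0]
      generalize (M.getD (j / 3) default).2.1 = y at hy ⊢
      norm_num
      exact ⟨by linarith, by linarith, by linarith⟩
  · rcases Nat.eq_zero_or_pos k with hk | hk
    · have hM : M = [] := List.length_eq_zero_iff.mp (by omega)
      subst hM
      simp at hMx hMy hMz
      simp [hk, ← hMx, ← hMy, ← hMz]
    · have hbp : 0 < b := hb0 hk
      have hAbs : ∀ m, m ≤ k → ∑ i ∈ Finset.range (3 * m), |∑ j ∈ Finset.range (i + 1), π j| =
          ∑ i ∈ Finset.range m,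
            ((M.getD i default).1 + (M.getD i default).2.1 + 2 * b) := by
        intro m
        induction m with
        | zero => simp
        | succ n ih =>
          intro hn
          have hnk : n < k := by omega
          have hx := hxb _ (hmem n hnk)
          have hy := hyb _ (hmem n hnk)
          rw [show 3 * (n + 1) = 3 * n + 1 + 1 + 1 from by ring,
            Finset.sum_range_succ (fun i => |∑ j ∈ Finset.range (i + 1), π j|),
            Finset.sum_range_succ (fun i => |∑ j ∈ Finset.range (i + 1), π j|),
            Finset.sum_range_succ (fun i => |∑ j ∈ Finset.range (i + 1), π j|),
            ih (by omega),
            Finset.sum_range_succ (fun i => ((M.getD i default).1 + (M.getD i default).2.1 + 2 * b))]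
          rw [show (3 * n + 1 + 1 : ℕ) = 3 * n + 2 from rfl,
            show (3 * n + 2 + 1 : ℕ) = 3 * n + 3 from rfl,
            hP1 n hnk, hP2 n hnk, hP3 n hnk,
            abs_of_pos hx.1,
            abs_of_neg (show -(2 * b) - (M.getD n default).2.1 < 0 by linarith [hy.1]),
            abs_zero]
          ring
      rw [hAbs k le_rfl, Finset.mul_sum, ← hMx, ← hMy, ← hMz]
      have hgoal : ∑ i ∈ Finset.range k, 2 * ((M.getD i default).1 + (M.getD i default).2.1 + 2 * b)
          = (M.map (fun t => 2 * (t.1 + t.2.1 + 2 * b))).sum := by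
        rw [← hlen]
        exact list_sum_getD (fun t => 2 * (t.1 + t.2.1 + 2 * b)) default M
      rw [hgoal]
      simp only [Multiset.map_coe, Multiset.coe_add, Multiset.sum_coe, List.map_map,
        List.map_append, List.sum_append]
      have e1 : M.map ((fun x => |x|) ∘ Prod.fst) = M.map fun t => t.1 := by
        refine List.map_congr_left fun t ht => ?_
        simp only [Function.comp_apply]
        exact abs_of_pos (hxb t ht).1
      have e2 : M.map ((fun x => |x|) ∘ ((fun y => y + 2 * b) ∘ fun t => t.2.1)) =
          M.map fun t => t.2.1 + 2 * b := by
        refine List.map_congr_left fun t ht => ?_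
        simp only [Function.comp_apply]
        exact abs_of_pos (by linarith [(hyb t ht).1])
      have e3 : M.map ((fun x => |x|) ∘ ((fun z => z - 3 * b) ∘ fun t => t.2.2)) =
          M.map fun t => 3 * b - t.2.2 := by
        refine List.map_congr_left fun t ht => ?_
        simp only [Function.comp_apply]
        rw [abs_of_neg (by linarith [(hzb t ht).2] : t.2.2 - 3 * b < 0)]
        ring
      rw [e1, e2, e3]
      have hsum : ∀ L : List (ℤ × ℤ × ℤ), (∀ t ∈ L, t.1 + t.2.1 + t.2.2 = b) →
          (L.map (fun t => 2 * (t.1 + t.2.1 + 2 * b))).sum =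
          (L.map fun t => t.1).sum + (L.map fun t => t.2.1 + 2 * b).sum +
            (L.map fun t => 3 * b - t.2.2).sum := by
        intro L
        induction L with
        | nil => simp
        | cons a L ih =>
          intro h
          have ha := h a (List.mem_cons_self)
          simp only [List.map_cons, List.sum_cons]
          rw [ih (fun t ht => h t (List.mem_cons_of_mem a ht))]
          ring_nf
          linarith
      exact hsum M htriple
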